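/- If p(z) is a complex polynomial of degree n with no zeros in |z| < k where k ≥ 1, then max_{|z|=1} |p'(z)| ≤ (n/(1+k)) · max_{|z|=1} |p(z)|. -/

import Mathlib

open Polynomial

noncomputable def maxMod (p : Polynomial ℂ) (c : ℝ) : ℝ :=
  sSup ((fun z => ‖p.eval z‖) '' {z : ℂ | ‖z‖ = c})

noncomputable def minMod (p : Polynomial ℂ) (c : ℝ) : ℝ :=
  sInf ((fun z => ‖p.eval z‖) '' {z : ℂ | ‖z‖ = c})

noncomputable def polarDeriv (p : Polynomial ℂ) (α : ℂ) : Polynomial ℂ :=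
  C (p.natDegree : ℂ) * p + (C α - X) * derivative p


lemma msq : ∀ s : Multiset ℝ, s.sum ^ 2 ≤ s.card * (s.map (fun x => x ^ 2)).sum := by
  intro s
  induction s using Multiset.induction with
  | empty => simp
  | cons a t ih =>
    by_cases ht : t = 0
    · subst ht; simp
    simp only [Multiset.sum_cons, Multiset.card_cons, Multiset.map_cons]
    have hQ : (0:ℝ) ≤ (t.map (fun x => x ^ 2)).sum :=
      Multiset.sum_nonneg (by intro x hx; obtain ⟨y, _, rfl⟩ := Multiset.mem_map.1 hx; positivity)
    have hc1 : (1:ℝ) ≤ (t.card : ℝ) := by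
      have := Multiset.card_pos.2 ht
      exact_mod_cast this
    push_cast
    nlinarith [sq_nonneg ((t.card : ℝ) * a - t.sum), ih, hQ, hc1, sq_nonneg t.sum]
lemma re_msum (s : Multiset ℂ) : (s.map Complex.re).sum = s.sum.re :=
  (map_multiset_sum Complex.reAddGroupHom s).symm

lemma msum_nonpos {s : Multiset ℝ} (h : ∀ x ∈ s, x ≤ 0) : s.sum ≤ 0 := by
  induction s using Multiset.induction with
  | empty => simp
  | cons a t ih =>
    simp only [Multiset.sum_cons]
    have := h a (Multiset.mem_cons_self a t)
    have := ih (fun x hx => h x (Multiset.mem_cons_of_mem hx))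
    linarith

lemma abs_msum_sq (s : Multiset ℂ) :
    ‖s.sum‖ ^ 2 ≤ s.card * (s.map Complex.normSq).sum := by
  have h1 : ‖s.sum‖ ≤ (s.map (‖·‖)).sum := by
    simpa using norm_multiset_sum_le s
  have h2 : ((s.map (‖·‖)).sum) ^ 2 ≤ s.card * ((s.map (‖·‖)).map (fun x => x ^ 2)).sum := by
    simpa using msq (s.map (‖·‖))
  have h3 : ((s.map (‖·‖)).map (fun x => x ^ 2)).sum = (s.map Complex.normSq).sum := by
    rw [Multiset.map_map]
    congr 1
    apply Multiset.map_congr rfl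
    intro x _
    simp [Complex.sq_norm]
  have h0 : (0:ℝ) ≤ ‖s.sum‖ := norm_nonneg _
  calc ‖s.sum‖ ^ 2 ≤ ((s.map (‖·‖)).sum) ^ 2 := by
        apply pow_le_pow_left₀ h0 h1
    _ ≤ _ := by rw [← h3]; simpa using h2

lemma sum_map_lin (s : Multiset ℂ) (a : ℝ) :
    (s.map (fun w => a * Complex.normSq w + 2 * w.re - 1)).sum
      = a * (s.map Complex.normSq).sum + 2 * s.sum.re - s.card := by
  induction s using Multiset.induction with
  | empty => simp
  | cons b t ih =>
    simp only [Multiset.map_cons, Multiset.sum_cons, Multiset.card_cons, Complex.add_re, ih]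
    push_cast
    ring

lemma abs_sub_sq' (z w : ℂ) :
    ‖z - w‖ ^ 2 = ‖z‖ ^ 2 - 2 * (z.re * w.re + z.im * w.im) + ‖w‖ ^ 2 := by
  rw [Complex.sq_norm, Complex.sq_norm, Complex.sq_norm, Complex.normSq_apply, Complex.normSq_apply,
    Complex.normSq_apply, Complex.sub_re, Complex.sub_im]
  ring

lemma sumDisk (κ : ℝ) (hκ : 1 ≤ κ) (s : Multiset ℂ)
    (h : ∀ w ∈ s, (κ^2 - 1) * Complex.normSq w + 2 * w.re - 1 ≤ 0) :
    κ * ‖s.sum‖ ≤ ‖(s.card : ℂ) - s.sum‖ := by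
  set S := s.sum with hS
  set m := s.card with hm
  set Q := (s.map Complex.normSq).sum with hQdef
  have hQ0 : (0:ℝ) ≤ Q := Multiset.sum_nonneg (by
    intro x hx; obtain ⟨y, _, rfl⟩ := Multiset.mem_map.1 hx; exact Complex.normSq_nonneg y)
  have h1 : ‖S‖ ^ 2 ≤ m * Q := abs_msum_sq s
  have h2 : (κ^2 - 1) * Q + 2 * S.re - m ≤ 0 := by
    have hsum : (s.map (fun w => (κ^2 - 1) * Complex.normSq w + 2 * w.re - 1)).sum ≤ 0 :=
      msum_nonpos (by intro x hx; obtain ⟨y, hy, rfl⟩ := Multiset.mem_map.1 hx; exact h y hy)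
    rwa [sum_map_lin] at hsum
  have hY : ‖(m : ℂ) - S‖ ^ 2 = (m:ℝ)^2 - 2 * m * S.re + ‖S‖ ^ 2 := by
    rw [abs_sub_sq']
    simp [Complex.norm_natCast]
    ring
  have hX0 : (0:ℝ) ≤ ‖S‖ := norm_nonneg _
  have hY0 : (0:ℝ) ≤ ‖(m : ℂ) - S‖ := norm_nonneg _
  have hk2 : (0:ℝ) ≤ κ^2 - 1 := by nlinarith
  have hm0 : (0:ℝ) ≤ (m:ℝ) := Nat.cast_nonneg m
  have hsq : (κ * ‖S‖)^2 ≤ ‖(m : ℂ) - S‖ ^ 2 := by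
    rw [hY, mul_pow]
    nlinarith [mul_le_mul_of_nonneg_left h1 hk2, mul_le_mul_of_nonneg_left h2 hm0]
  nlinarith [hsq, mul_nonneg (mul_nonneg (le_trans zero_le_one hκ) hX0) hY0]

lemma sumHalf (s : Multiset ℂ) (h : ∀ w ∈ s, 1 ≤ 2 * w.re) :
    ‖(s.card : ℂ) - s.sum‖ ≤ ‖s.sum‖ := by
  set S := s.sum with hS
  set m := s.card with hm
  have h2 : (m:ℝ) ≤ 2 * S.re := by
    have hsum : (0:ℝ) ≤ (s.map (fun w => (0:ℝ) * Complex.normSq w + 2 * w.re - 1)).sum :=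
      Multiset.sum_nonneg (by
        intro x hx; obtain ⟨y, hy, rfl⟩ := Multiset.mem_map.1 hx
        simp only [zero_mul, zero_add]; linarith [h y hy])
    rw [sum_map_lin] at hsum
    simp at hsum
    linarith
  have hY : ‖(m : ℂ) - S‖ ^ 2 = (m:ℝ)^2 - 2 * m * S.re + ‖S‖ ^ 2 := by
    rw [abs_sub_sq']
    simp [Complex.norm_natCast]
    ring
  have hX0 : (0:ℝ) ≤ ‖S‖ := norm_nonneg _
  have hY0 : (0:ℝ) ≤ ‖(m : ℂ) - S‖ := norm_nonneg _
  have hm0 : (0:ℝ) ≤ (m:ℝ) := Nat.cast_nonneg m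
  nlinarith [hY, mul_le_mul_of_nonneg_left h2 hm0]
lemma eval_deriv_factored (a : ℂ) (s : Multiset ℂ) (z : ℂ) (hz : ∀ r ∈ s, z ≠ r) :
    eval z (derivative (C a * (s.map (fun r => X - C r)).prod))
      = eval z (C a * (s.map (fun r => X - C r)).prod) * (s.map (fun r => (z - r)⁻¹)).sum := by
  induction s using Multiset.induction with
  | empty => simp
  | cons b t ih =>
    have hzb : z - b ≠ 0 := sub_ne_zero.2 (hz b (Multiset.mem_cons_self b t))
    have hzt : ∀ r ∈ t, z ≠ r := fun r hr => hz r (Multiset.mem_cons_of_mem hr)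
    simp only [Multiset.map_cons, Multiset.prod_cons, Multiset.sum_cons]
    have hre : C a * ((X - C b) * (t.map (fun r => X - C r)).prod)
        = (X - C b) * (C a * (t.map (fun r => X - C r)).prod) := by ring
    rw [hre, derivative_mul]
    simp only [derivative_sub, derivative_X, derivative_C, sub_zero, eval_add, eval_mul,
      eval_sub, eval_X, eval_C, eval_one, one_mul]
    rw [ih hzt]
    field_simp
    simp only [eval_mul, eval_C]
    ring

lemma phi_of_abs (κ : ℝ) (hκ0 : 0 ≤ κ) (w : ℂ) (h : κ * ‖w‖ ≤ ‖1 - w‖) :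
    (κ^2 - 1) * Complex.normSq w + 2 * w.re - 1 ≤ 0 := by
  have h1 : (κ * ‖w‖)^2 ≤ ‖1 - w‖^2 :=
    pow_le_pow_left₀ (by positivity) h 2
  have h2 := abs_sub_sq' 1 w
  simp only [Complex.one_re, Complex.one_im, one_mul, zero_mul, add_zero, norm_one,
    one_pow] at h2
  have h3 : ‖w‖ ^ 2 = Complex.normSq w := Complex.sq_norm w
  rw [mul_pow] at h1
  nlinarith [Complex.normSq_nonneg w]

-- Lemma A (pointwise): all roots have |r| ≥ κ ≥ 1
lemma pointwiseDisk (f : Polynomial ℂ) (hf : f ≠ 0) (κ : ℝ) (hκ : 1 ≤ κ) (z₀ : ℂ)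
    (hz₀ : ‖z₀‖ = 1) (hroots : ∀ r ∈ f.roots, κ ≤ ‖r‖)
    (hne : eval z₀ f ≠ 0) :
    κ * ‖eval z₀ (derivative f)‖
      ≤ ‖(f.natDegree : ℂ) * eval z₀ f - z₀ * eval z₀ (derivative f)‖ := by
  have hcard : Multiset.card f.roots = f.natDegree :=
    Polynomial.splits_iff_card_roots.mp (IsAlgClosed.splits f)
  have hfac := (Polynomial.C_leadingCoeff_mul_prod_multiset_X_sub_C hcard)
  have hzr : ∀ r ∈ f.roots, z₀ ≠ r := by
    intro r hr h
    exact hne (h ▸ (Polynomial.isRoot_of_mem_roots hr))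
  have hd : eval z₀ (derivative f) = eval z₀ f * (f.roots.map (fun r => (z₀ - r)⁻¹)).sum := by
    have h := eval_deriv_factored f.leadingCoeff f.roots z₀ hzr
    rwa [hfac] at h
  set W := (f.roots.map (fun r => z₀ * (z₀ - r)⁻¹))
  have hWsum : W.sum = z₀ * (f.roots.map (fun r => (z₀ - r)⁻¹)).sum := by
    rw [← Multiset.sum_map_mul_left]
  have hWcard : W.card = f.natDegree := by
    rw [Multiset.card_map, hcard]
  have hmem : ∀ w ∈ W, (κ^2 - 1) * Complex.normSq w + 2 * w.re - 1 ≤ 0 := by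
    intro w hw
    obtain ⟨r, hr, rfl⟩ := Multiset.mem_map.1 hw
    apply phi_of_abs κ (le_trans zero_le_one hκ)
    have hzr' : z₀ - r ≠ 0 := sub_ne_zero.2 (hzr r hr)
    have h1 : (1 : ℂ) - z₀ * (z₀ - r)⁻¹ = -r * (z₀ - r)⁻¹ := by
      field_simp
      ring
    rw [h1]
    simp only [norm_mul, norm_neg, norm_inv, hz₀, one_mul]
    have := hroots r hr
    have h2 : (0:ℝ) ≤ (‖z₀ - r‖)⁻¹ := by positivity
    exact mul_le_mul_of_nonneg_right this h2
  have key := sumDisk κ hκ W hmem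
  rw [hWcard, hWsum] at key
  -- multiply through by |f(z₀)|
  have e1 : ‖eval z₀ f‖ * (κ * ‖z₀ * (f.roots.map (fun r => (z₀ - r)⁻¹)).sum‖)
      = κ * ‖eval z₀ (derivative f)‖ := by
    rw [hd]
    simp only [norm_mul, hz₀]
    ring
  have e2 : ‖eval z₀ f‖ * ‖(f.natDegree : ℂ) - z₀ * (f.roots.map (fun r => (z₀ - r)⁻¹)).sum‖
      = ‖(f.natDegree : ℂ) * eval z₀ f - z₀ * eval z₀ (derivative f)‖ := by
    rw [← norm_mul, hd]
    congr 1
    ring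
  rw [← e1, ← e2]
  exact mul_le_mul_of_nonneg_left key (norm_nonneg _)

-- dual pointwise: all roots have |r| < 1
lemma pointwiseHalf (f : Polynomial ℂ) (z₀ : ℂ)
    (hz₀ : ‖z₀‖ = 1) (hroots : ∀ r ∈ f.roots, ‖r‖ < 1)
    (hne : eval z₀ f ≠ 0) :
    ‖(f.natDegree : ℂ) * eval z₀ f - z₀ * eval z₀ (derivative f)‖
      ≤ ‖eval z₀ (derivative f)‖ := by
  have hcard : Multiset.card f.roots = f.natDegree :=
    Polynomial.splits_iff_card_roots.mp (IsAlgClosed.splits f)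
  have hf : f ≠ 0 := by
    intro h; rw [h] at hne; simp at hne
  have hfac := (Polynomial.C_leadingCoeff_mul_prod_multiset_X_sub_C hcard)
  have hzr : ∀ r ∈ f.roots, z₀ ≠ r := by
    intro r hr h
    exact hne (h ▸ (Polynomial.isRoot_of_mem_roots hr))
  have hd : eval z₀ (derivative f) = eval z₀ f * (f.roots.map (fun r => (z₀ - r)⁻¹)).sum := by
    have h := eval_deriv_factored f.leadingCoeff f.roots z₀ hzr
    rwa [hfac] at h
  set W := (f.roots.map (fun r => z₀ * (z₀ - r)⁻¹))
  have hWsum : W.sum = z₀ * (f.roots.map (fun r => (z₀ - r)⁻¹)).sum := by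
    rw [← Multiset.sum_map_mul_left]
  have hWcard : W.card = f.natDegree := by
    rw [Multiset.card_map, hcard]
  have hmem : ∀ w ∈ W, 1 ≤ 2 * w.re := by
    intro w hw
    obtain ⟨r, hr, rfl⟩ := Multiset.mem_map.1 hw
    have hzr' : z₀ - r ≠ 0 := sub_ne_zero.2 (hzr r hr)
    -- |1 - w| < |w|  ⇒ Re w ≥ 1/2
    have h1 : (1 : ℂ) - z₀ * (z₀ - r)⁻¹ = -r * (z₀ - r)⁻¹ := by field_simp; ring
    have h2 : ‖1 - z₀ * (z₀ - r)⁻¹‖ ≤ ‖z₀ * (z₀ - r)⁻¹‖ := by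
      rw [h1]
      simp only [norm_mul, norm_neg, norm_inv, hz₀, one_mul]
      have h3 : (0:ℝ) ≤ (‖z₀ - r‖)⁻¹ := by positivity
      simpa using mul_le_mul_of_nonneg_right (le_of_lt (hroots r hr)) h3
    set w := z₀ * (z₀ - r)⁻¹
    have h4 := pow_le_pow_left₀ (norm_nonneg _) h2 2
    have h5 := abs_sub_sq' 1 w
    simp only [Complex.one_re, Complex.one_im, one_mul, zero_mul, add_zero, norm_one,
      one_pow] at h5
    nlinarith [Complex.sq_norm w, Complex.normSq_nonneg w]
  have key := sumHalf W hmem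
  rw [hWcard, hWsum] at key
  have e1 : ‖eval z₀ f‖ * ‖z₀ * (f.roots.map (fun r => (z₀ - r)⁻¹)).sum‖
      = ‖eval z₀ (derivative f)‖ := by
    rw [hd]; simp only [norm_mul, hz₀]; ring
  have e2 : ‖eval z₀ f‖ * ‖(f.natDegree : ℂ) - z₀ * (f.roots.map (fun r => (z₀ - r)⁻¹)).sum‖
      = ‖(f.natDegree : ℂ) * eval z₀ f - z₀ * eval z₀ (derivative f)‖ := by
    rw [← norm_mul, hd]; congr 1; ring
  rw [← e1, ← e2]
  exact mul_le_mul_of_nonneg_left key (norm_nonneg _)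
lemma circ_eq : {z : ℂ | ‖z‖ = 1} = Metric.sphere (0:ℂ) 1 := by
  ext z; simp [Complex.dist_eq]

lemma maxMod_bdd (p : Polynomial ℂ) :
    BddAbove ((fun z => ‖p.eval z‖) '' {z : ℂ | ‖z‖ = 1}) := by
  rw [circ_eq]
  apply IsCompact.bddAbove
  apply (isCompact_sphere (0:ℂ) 1).image
  continuity

lemma maxMod_ge (p : Polynomial ℂ) (z : ℂ) (hz : ‖z‖ = 1) :
    ‖p.eval z‖ ≤ maxMod p 1 :=
  le_csSup (maxMod_bdd p) ⟨z, hz, rfl⟩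

lemma maxMod_le (p : Polynomial ℂ) (c : ℝ)
    (h : ∀ z : ℂ, ‖z‖ = 1 → ‖p.eval z‖ ≤ c) : maxMod p 1 ≤ c := by
  apply csSup_le
  · exact ⟨_, ⟨(1:ℂ), by simp, rfl⟩⟩
  · rintro x ⟨z, hz, rfl⟩; exact h z hz

lemma maxMod_nonneg (p : Polynomial ℂ) : 0 ≤ maxMod p 1 :=
  le_trans (norm_nonneg _) (maxMod_ge p 1 (by simp))

noncomputable def qrev (p : Polynomial ℂ) : Polynomial ℂ :=
  ∑ i ∈ Finset.range (p.natDegree + 1), C (p.coeff (p.natDegree - i)) * X ^ i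

lemma qrev_eval (p : Polynomial ℂ) (w : ℂ) (hw : w ≠ 0) :
    eval w (qrev p) = w ^ p.natDegree * eval w⁻¹ p := by
  rw [qrev, Polynomial.eval_finset_sum, Polynomial.eval_eq_sum_range, Finset.mul_sum]
  conv_rhs => rw [← Finset.sum_range_reflect]
  apply Finset.sum_congr rfl
  intro i hi
  have hi' : i ≤ p.natDegree := Nat.lt_succ_iff.mp (Finset.mem_range.mp hi)
  rw [show p.natDegree + 1 - 1 - i = p.natDegree - i from by omega]
  simp only [eval_mul, eval_C, eval_pow, eval_X, inv_pow]
  field_simp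
  rw [mul_assoc, ← pow_add, show i + (p.natDegree - i) = p.natDegree from by omega]

lemma qrev_bound (p : Polynomial ℂ) (w : ℂ) (hw : ‖w‖ ≤ 1) :
    ‖eval w (qrev p)‖ ≤ maxMod p 1 := by
  have hb : Bornology.IsBounded (Metric.ball (0:ℂ) 1) := Metric.isBounded_ball
  have hd : DiffContOnCl ℂ (fun z => eval z (qrev p)) (Metric.ball (0:ℂ) 1) :=
    ((qrev p).differentiable).diffContOnCl
  rw [show ‖eval w (qrev p)‖ = ‖eval w (qrev p)‖ from rfl]
  apply Complex.norm_le_of_forall_mem_frontier_norm_le hb hd (C := maxMod p 1)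
  · intro z hz
    rw [frontier_ball (0:ℂ) one_ne_zero] at hz
    have hz1 : ‖z‖ = 1 := by simpa [Complex.dist_eq] using hz
    have hz0 : z ≠ 0 := by intro h; rw [h] at hz1; simp at hz1
    rw [qrev_eval p z hz0, norm_mul, norm_pow, hz1, one_pow, one_mul]
    apply maxMod_ge
    rw [norm_inv, hz1, inv_one]
  · rw [closure_ball (0:ℂ) one_ne_zero]
    simpa [Complex.dist_eq] using hw

lemma growth (p : Polynomial ℂ) (z : ℂ) (hz : 1 ≤ ‖z‖) :
    ‖eval z p‖ ≤ maxMod p 1 * ‖z‖ ^ p.natDegree := by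
  have hz0 : z ≠ 0 := by
    intro h; rw [h] at hz; simp at hz; linarith
  have hw : ‖z⁻¹‖ ≤ 1 := by
    rw [norm_inv]
    exact inv_le_one_of_one_le₀ hz
  have h1 := qrev_bound p z⁻¹ hw
  rw [qrev_eval p z⁻¹ (inv_ne_zero hz0), inv_inv, norm_mul, norm_pow, norm_inv] at h1
  have hzpos : 0 < ‖z‖ := lt_of_lt_of_le one_pos hz
  have h2 : (‖z‖)⁻¹ ^ p.natDegree * ‖eval z p‖ ≤ maxMod p 1 := h1
  calc ‖eval z p‖
      = ((‖z‖)⁻¹ ^ p.natDegree * ‖eval z p‖) * ‖z‖ ^ p.natDegree := by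
        field_simp
        rw [mul_assoc, ← mul_pow, one_div, inv_mul_cancel₀ hzpos.ne', one_pow, mul_one]
    _ ≤ maxMod p 1 * ‖z‖ ^ p.natDegree := by
        apply mul_le_mul_of_nonneg_right h2 (by positivity)

lemma leadCoeff_bound (p : Polynomial ℂ) :
    ‖p.coeff p.natDegree‖ ≤ maxMod p 1 := by
  have h := qrev_bound p 0 (by simp)
  have : eval 0 (qrev p) = p.coeff p.natDegree := by
    rw [qrev, Polynomial.eval_finset_sum]
    rw [Finset.sum_eq_single 0]
    · simp
    · intro b _ hb
      simp [zero_pow hb]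
    · intro h0
      simp at h0
  rwa [this] at h
lemma circle_infinite : Set.Infinite {z : ℂ | ‖z‖ = 1} := by
  have : Infinite (Set.Ioo (-1:ℝ) 1) := Set.Ioo.infinite (by norm_num)
  apply Set.infinite_of_injective_forall_mem
    (f := fun t : Set.Ioo (-1:ℝ) 1 => Complex.mk t.1 (Real.sqrt (1 - t.1^2)))
  · intro a b hab
    have : (a:ℝ) = b := congrArg Complex.re hab
    exact Subtype.ext this
  · intro t
    have h1 : (t:ℝ)^2 ≤ 1 := by
      have := t.2
      simp only [Set.mem_Ioo] at this
      nlinarith [this.1, this.2]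
    simp only [Set.mem_setOf_eq, Complex.norm_def, Complex.normSq_mk]
    rw [Real.mul_self_sqrt (by nlinarith)]
    rw [show (t:ℝ) * (t:ℝ) + (1 - (t:ℝ)^2) = 1 by ring, Real.sqrt_one]

lemma maxMod_pos (p : Polynomial ℂ) (hp : p ≠ 0) : 0 < maxMod p 1 := by
  rcases lt_or_eq_of_le (maxMod_nonneg p) with h | h
  · exact h
  exfalso
  apply hp
  apply Polynomial.eq_zero_of_infinite_isRoot
  apply Set.Infinite.mono (s := {z : ℂ | ‖z‖ = 1})
  · intro z hz
    have h2 := maxMod_ge p z hz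
    rw [← h] at h2
    have := norm_nonneg (p.eval z)
    have h3 : ‖p.eval z‖ = 0 := le_antisymm h2 this
    simpa [Polynomial.IsRoot] using norm_eq_zero.mp h3
  · exact circle_infinite

theorem malik (p : Polynomial ℂ) (n : ℕ) (hn : p.natDegree = n) (k : ℝ)
    (hk : 1 ≤ k)
    (hz : ∀ z : ℂ, p.IsRoot z → k ≤ ‖z‖) :
    maxMod (derivative p) 1 ≤ (n / (1 + k)) * maxMod p 1 := by
  by_cases hn0 : n = 0
  · subst hn0
    have hp : p = C (p.coeff 0) := Polynomial.eq_C_of_natDegree_eq_zero hn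
    have hd : derivative p = 0 := by rw [hp]; simp
    rw [hd]
    have h0 : maxMod (0 : Polynomial ℂ) 1 = 0 := by
      apply le_antisymm
      · apply maxMod_le; intro z _; simp
      · exact maxMod_nonneg 0
    rw [h0]
    simp only [Nat.cast_zero, zero_div, zero_mul, le_refl]
  have hp : p ≠ 0 := by
    intro h
    rw [h, Polynomial.natDegree_zero] at hn
    exact hn0 hn.symm
  have hn1 : 1 ≤ n := Nat.one_le_iff_ne_zero.2 hn0
  set M := maxMod p 1 with hM
  have hMpos : 0 < M := maxMod_pos p hp
  have hk0 : (0:ℝ) < 1 + k := by linarith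
  have hnM : (0:ℝ) < n * M := by
    have : (0:ℝ) < (n:ℝ) := by exact_mod_cast hn1
    positivity
  -- pointwise bound
  have main : ∀ z₀ : ℂ, ‖z₀‖ = 1 →
      ‖eval z₀ (derivative p)‖ ≤ n / (1 + k) * M := by
    intro z₀ hz₀
    set A := ‖eval z₀ (derivative p)‖ with hA
    set B := ‖(n : ℂ) * eval z₀ p - z₀ * eval z₀ (derivative p)‖ with hB
    have hA0 : 0 ≤ A := norm_nonneg _
    -- Step 1 : k * A ≤ B
    have step1 : k * A ≤ B := by
      by_cases hpz : eval z₀ p = 0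
      · have hk1 : k = 1 := le_antisymm (by simpa [hz₀] using hz z₀ hpz) hk
        have hBA : B = A := by
          rw [hB, hpz, hA]
          simp [norm_mul, hz₀]
        rw [hk1, one_mul, hBA]
      · have h := pointwiseDisk p hp k hk z₀ hz₀
          (fun r hr => hz r (Polynomial.isRoot_of_mem_roots hr)) hpz
        rw [hn] at h
        exact h
    -- Step 2 : ∀ t > 1, B ≤ |A - t * n * M|
    have step2 : ∀ t : ℝ, 1 < t → B ≤ |A - t * (n * M)| := by
      intro t ht
      by_cases hA0' : eval z₀ (derivative p) = 0
      · -- A = 0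
        have hA' : A = 0 := by rw [hA, hA0']; simp
        rw [hA']
        -- B = |n p(z₀)| ≤ n M ≤ t n M
        have hBle : B ≤ n * M := by
          rw [hB, hA0']
          simp only [mul_zero, sub_zero, norm_mul, Complex.norm_natCast]
          have := maxMod_ge p z₀ hz₀
          exact mul_le_mul_of_nonneg_left this (Nat.cast_nonneg n)
        rw [abs_of_nonpos (by nlinarith)]
        nlinarith
      have hApos : 0 < A := by
        rw [hA]
        exact norm_pos_iff.mpr hA0'
      set u : ℂ := (A : ℂ)⁻¹ * eval z₀ (derivative p) with hu
      have hz₀0 : z₀ ≠ 0 := by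
        intro h; rw [h] at hz₀; simp at hz₀
      have hzpow : z₀ ^ (n-1) ≠ 0 := pow_ne_zero _ hz₀0
      have habs_u : ‖u‖ = 1 := by
        rw [hu, norm_mul, norm_inv, Complex.norm_real, Real.norm_eq_abs, abs_of_pos hApos, ← hA]
        field_simp
      set lam : ℂ := (t : ℂ) * u * (z₀ ^ (n-1))⁻¹ with hlam
      have habs_lam : ‖lam‖ = t := by
        rw [hlam, norm_mul, norm_mul, norm_inv, norm_pow, hz₀, one_pow, inv_one, mul_one,
          habs_u, mul_one, Complex.norm_real, Real.norm_eq_abs, abs_of_pos (by linarith)]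
      set s : Polynomial ℂ := p - C (lam * M) * X ^ n with hs
      -- (a) roots of s have abs < 1
      have hroots_s : ∀ r ∈ s.roots, ‖r‖ < 1 := by
        intro r hr
        by_contra hge
        push_neg at hge
        have hroot : eval r s = 0 := Polynomial.isRoot_of_mem_roots hr
        have hgrowth := growth p r hge
        rw [hn, ← hM] at hgrowth
        have h1 : ‖eval r p‖ < t * M * ‖r‖ ^ n := by
          have h2 : M * ‖r‖ ^ n < t * M * ‖r‖ ^ n := by
            have hx : (0:ℝ) < ‖r‖ ^ n := by positivity
            nlinarith [mul_pos (mul_pos (sub_pos.2 ht) hMpos) hx]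
          exact lt_of_le_of_lt hgrowth h2
        have h3 : ‖eval r (C (lam * M) * X ^ n)‖ = t * M * ‖r‖ ^ n := by
          simp only [eval_mul, eval_C, eval_pow, eval_X, norm_mul, norm_pow, habs_lam]
          rw [Complex.norm_real, Real.norm_eq_abs, abs_of_pos hMpos]
        have h4 : eval r s = eval r p - eval r (C (lam * M) * X ^ n) := by
          rw [hs]; simp
        rw [h4] at hroot
        have h5 : eval r p = eval r (C (lam * M) * X ^ n) := sub_eq_zero.mp hroot
        rw [h5, h3] at h1
        linarith
      -- (b) natDegree s = n
      have hcoeff : s.coeff n = p.coeff n - lam * M := by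
        rw [hs, Polynomial.coeff_sub, Polynomial.coeff_C_mul, Polynomial.coeff_X_pow]
        simp
      have hlc : ‖p.coeff n‖ ≤ M := by
        have := leadCoeff_bound p
        rwa [hn] at this
      have hcne : s.coeff n ≠ 0 := by
        rw [hcoeff]
        intro h
        have : p.coeff n = lam * M := sub_eq_zero.mp h
        rw [this, norm_mul, habs_lam, Complex.norm_real, Real.norm_eq_abs, abs_of_pos hMpos] at hlc
        nlinarith
      have hdeg_s : s.natDegree = n := by
        apply le_antisymm
        · apply le_trans (Polynomial.natDegree_sub_le p _)
          apply max_le (le_of_eq hn)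
          apply le_trans (Polynomial.natDegree_C_mul_le _ _)
          exact le_of_eq (Polynomial.natDegree_X_pow n)
        · exact Polynomial.le_natDegree_of_ne_zero hcne
      -- (c) eval z₀ s ≠ 0
      have hsz₀ : eval z₀ s ≠ 0 := by
        intro h
        have := hroots_s z₀ (by
          rw [Polynomial.mem_roots']
          exact ⟨by intro h0; rw [h0, Polynomial.natDegree_zero] at hdeg_s; omega, h⟩)
        rw [hz₀] at this
        linarith
      -- apply pointwiseHalf
      have hph := pointwiseHalf s z₀ hz₀ hroots_s hsz₀
      rw [hdeg_s] at hph
      -- compute both sides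
      have hzn : z₀ ^ n = z₀ ^ (n-1) * z₀ := by
        rw [← pow_succ]
        congr 1
        omega
      have hders : eval z₀ (derivative s) = eval z₀ (derivative p) - lam * M * n * z₀ ^ (n-1) := by
        rw [hs]
        simp only [derivative_sub, Polynomial.derivative_C_mul_X_pow, eval_sub, eval_mul,
          eval_C, eval_pow, eval_X]
      have hevs : eval z₀ s = eval z₀ p - lam * M * z₀ ^ n := by
        rw [hs]; simp
      have hleft : (n : ℂ) * eval z₀ s - z₀ * eval z₀ (derivative s)
          = (n : ℂ) * eval z₀ p - z₀ * eval z₀ (derivative p) := by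
        rw [hders, hevs, hzn]
        ring
      have hlamz : lam * z₀ ^ (n-1) = (t:ℂ) * u := by
        rw [hlam]
        field_simp
      have hAne : (A : ℂ) ≠ 0 := Complex.ofReal_ne_zero.mpr (ne_of_gt hApos)
      have hderu : eval z₀ (derivative p) = (A : ℂ) * u := by
        rw [hu]
        field_simp
      have hright : eval z₀ (derivative s) = ((A - t * (n * M) : ℝ) : ℂ) * u := by
        rw [hders, hderu]
        have h6 : lam * (M:ℂ) * (n:ℂ) * z₀ ^ (n-1) = (t:ℂ) * u * M * n := by
          rw [show lam * (M:ℂ) * (n:ℂ) * z₀ ^ (n-1) = (lam * z₀ ^ (n-1)) * M * n by ring,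
            hlamz]
        rw [h6]
        push_cast
        ring
      rw [hleft] at hph
      rw [hright] at hph
      calc B ≤ ‖((A - t * (n * M) : ℝ) : ℂ) * u‖ := hph
        _ = |A - t * (n * M)| := by
            rw [norm_mul, habs_u, mul_one, Complex.norm_real, Real.norm_eq_abs]
    -- Step 3 : B ≤ |A - n * M|
    have step3 : B ≤ |A - n * M| := by
      by_contra hcon
      push_neg at hcon
      set e : ℝ := (B - |A - n * M|) / 2 with he
      have he0 : 0 < e := by
        rw [he]
        linarith
      set t : ℝ := 1 + e / (n * M) with htdef
      have ht1 : 1 < t := by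
        rw [htdef]
        have : 0 < e / (n * M) := div_pos he0 hnM
        linarith
      have h7 := step2 t ht1
      have h8 : t * (n * M) = n * M + e := by
        rw [htdef]
        field_simp
      have h9 : |A - t * (n * M)| ≤ |A - n * M| + e := by
        rw [h8, show A - (n * M + e) = (A - n * M) + (-e) by ring]
        calc |(A - n * M) + (-e)| ≤ |A - n * M| + |(-e)| := abs_add_le _ _
          _ = |A - n * M| + e := by rw [abs_neg, abs_of_pos he0]
      have : B ≤ |A - n * M| + e := le_trans h7 h9
      rw [he] at this
      linarith
    -- Step 4 : conclude pointwise
    rcases le_or_gt A (n * M) with hle | hlt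
    · rw [abs_of_nonpos (by linarith)] at step3
      rw [div_mul_eq_mul_div, le_div_iff₀ hk0]
      nlinarith
    · rw [abs_of_pos (by linarith)] at step3
      exfalso
      nlinarith [mul_nonneg (sub_nonneg.2 hk) hA0]
  -- conclude
  apply maxMod_le
  exact main

theorem stmt5 (p : Polynomial ℂ) (n : ℕ) (hn : p.natDegree = n) (k : ℝ)
    (hk : 1 ≤ k)
    (hz : ∀ z : ℂ, p.IsRoot z → k ≤ ‖z‖) :
    maxMod (derivative p) 1 ≤ (n / (1 + k)) * maxMod p 1 :=
  malik p n hn k hk hz
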